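/- If a = (a_1,...,a_n) is a p-ascent sequence avoiding the pattern 00 (i.e., all entries are distinct), then n - 1 ≤ max(a_1,...,a_n) ≤ n + p - 2. -/

import Mathlib

/-- Number of ascents of a sequence: indices j with a_j < a_{j+1}. -/
def ascN (l : List ℕ) : ℕ := (l.zip l.tail).countP (fun q => decide (q.1 < q.2))

/-- `a` is a p-ascent sequence: nonempty, starts with 0, and each later entry
is at most `p` plus the number of ascents of the preceding prefix. -/
def IsPAsc (p : ℕ) (a : List ℕ) : Prop :=
  a.head? = some 0 ∧ ∀ i : Fin a.length, 1 ≤ i.val → a.get i ≤ p + ascN (a.take i.val)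

def Avoids01 (a : List ℕ) : Prop := ∀ i j : Fin a.length, i < j → ¬ a.get i < a.get j

def Avoids10 (a : List ℕ) : Prop := ∀ i j : Fin a.length, i < j → ¬ a.get j < a.get i

def Avoids012 (a : List ℕ) : Prop :=
  ∀ i j k : Fin a.length, i < j → j < k → ¬ (a.get i < a.get j ∧ a.get j < a.get k)

/-- primitive: no two equal consecutive letters -/
def Primitive (a : List ℕ) : Prop := a.Chain' (· ≠ ·)

lemma le_foldr_max {l : List ℕ} {x : ℕ} (h : x ∈ l) : x ≤ l.foldr max 0 := by
  induction l with
  | nil => simp at h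
  | cons y ys ih =>
    rcases List.mem_cons.mp h with rfl | h
    · exact le_max_left _ _
    · exact le_trans (ih h) (le_max_right _ _)

lemma foldr_max_le {l : List ℕ} {b : ℕ} (h : ∀ x ∈ l, x ≤ b) : l.foldr max 0 ≤ b := by
  induction l with
  | nil => simp
  | cons y ys ih =>
    exact max_le (h y List.mem_cons_self) (ih fun x hx => h x (List.mem_cons_of_mem _ hx))

theorem stmt5 (p : ℕ) (hp : 1 ≤ p) (a : List ℕ) (h : IsPAsc p a) (hd : a.Nodup) :
    a.length - 1 ≤ a.foldr max 0 ∧ a.foldr max 0 ≤ a.length + p - 2 := by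
  obtain ⟨h0, hb⟩ := h
  have hne : a ≠ [] := by
    intro he; rw [he] at h0; simp at h0
  have hlen : 1 ≤ a.length := List.length_pos_iff.mpr hne
  constructor
  · -- lower bound
    have hsub : a.toFinset ⊆ Finset.range (a.foldr max 0 + 1) := by
      intro x hx
      simp only [Finset.mem_range, Nat.lt_succ_iff]
      exact le_foldr_max (List.mem_toFinset.mp hx)
    have := Finset.card_le_card hsub
    rw [List.toFinset_card_of_nodup hd, Finset.card_range] at this
    omega
  · -- upper bound
    apply foldr_max_le
    intro x hx
    obtain ⟨i, hxi⟩ := List.get_of_mem hx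
    rcases Nat.eq_zero_or_pos i.val with h0i | h1i
    · have : a.get i = 0 := by
        have : a.get ⟨0, hlen⟩ = 0 := by
          cases a with
          | nil => simp at hne
          | cons y l => simp at h0 ⊢; exact h0
        have hi0 : i = ⟨0, hlen⟩ := Fin.ext h0i
        rw [hi0]; exact this
      omega
    · have hle := hb i h1i
      have hasc : ascN (a.take i.val) ≤ i.val - 1 := by
        have h1 : ascN (a.take i.val) ≤ ((a.take i.val).zip (a.take i.val).tail).length :=
          List.countP_le_length
        rw [List.length_zip, List.length_tail, List.length_take] at h1
        have : min i.val a.length = i.val := min_eq_left (le_of_lt i.isLt)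
        omega
      have hi : i.val ≤ a.length - 1 := by omega
      rw [← hxi]
      omega
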